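/- Let (Ω(S),T) be a minimal substitution dynamical system over a finite alphabet A⊂ℝ, with unique T-invariant Borel probability measure μ. If there exists u∈W(S) starting with a letter e∈C such that uuue∈W(S), then for μ-almost every ω∈Ω(S) the operator H_ω has no eigenvalues (empty point spectrum). -/

import Mathlib

open List Filter Topology MeasureTheory

namespace SubstLR

variable {A : Type*}

/-- Apply the substitution `S` to a finite word. -/
def subst (S : A → List A) (w : List A) : List A := w.flatMap S

/-- `iter S n w` is `S^n(w)`. -/
def iter (S : A → List A) (n : ℕ) (w : List A) : List A := (subst S)^[n] w

/-- The set `W(S)` of finite words associated to `S`. -/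
def WS (S : A → List A) : Set (List A) := {w | ∃ (a : A) (n : ℕ), w <:+: iter S n [a]}

/-- `w` is a finite factor of the two-sided infinite word `ω`. -/
def IsFactor (w : List A) (ω : ℤ → A) : Prop :=
  ∃ k : ℤ, w = (List.range w.length).map fun i => ω (k + i)

/-- The subshift `Ω(S)` associated to `S`. -/
def OmegaS (S : A → List A) : Set (ℤ → A) := {ω | ∀ w, IsFactor w ω → w ∈ WS S}

/-- The set `W(Ω(S))` of finite factors of elements of `Ω(S)`. -/
def WOmega (S : A → List A) : Set (List A) := {w | ∃ ω ∈ OmegaS S, IsFactor w ω}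

/-- Condition (ℓ): `|S^n(e)| → ∞`. -/
def CondL (S : A → List A) (e : A) : Prop :=
  Tendsto (fun n => (iter S n [e]).length) atTop atTop

/-- Condition (o): every letter occurs in some `S^n(e)`. -/
def CondO (S : A → List A) (e : A) : Prop := ∀ a : A, ∃ n : ℕ, a ∈ iter S n [e]

/-- Condition (c): `W(S) = W(Ω(S))`. -/
def CondC (S : A → List A) : Prop := WS S = WOmega S

/-- `(Ω(S),T)` is a substitution dynamical system. -/
def IsSubstSystem (S : A → List A) : Prop := (∃ e, CondL S e ∧ CondO S e) ∧ CondC S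

/-- `v` occurs with bounded gaps in the set of words `W`. -/
def BddGaps (v : List A) (W : Set (List A)) : Prop :=
  ∃ L : ℕ, 0 < L ∧ ∀ w ∈ W, L ≤ w.length → v <:+: w

/-- Condition (BG) for the letter `e`. -/
def BG (S : A → List A) (e : A) : Prop := CondL S e ∧ CondO S e ∧ BddGaps [e] (WS S)

/-- The shift by `k`; `shift 1` is the map `T`. -/
def shift (k : ℤ) (ω : ℤ → A) : ℤ → A := fun n => ω (n + k)

/-- `(Ω(S),T)` is minimal: every orbit is dense in `Ω(S)`. -/
def Minimal [TopologicalSpace A] (S : A → List A) : Prop :=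
  ∀ ω ∈ OmegaS S, OmegaS S ⊆ closure {ω' | ∃ k : ℤ, ω' = shift k ω}

/-- `(Ω(S),T)` is linearly repetitive. -/
def LinRep (S : A → List A) : Prop :=
  ∃ C : ℝ, 0 < C ∧ ∀ v ∈ WS S, ∀ w ∈ WS S, C * v.length ≤ (w.length : ℝ) → v <:+: w

/-- `(Ω(S),T)` is aperiodic. -/
def Aperiodic (S : A → List A) : Prop :=
  ∀ ω ∈ OmegaS S, ∀ k : ℤ, k ≠ 0 → shift k ω ≠ ω

/-- The set `B` of letters `a` with `limsup |S^n(a)| < ∞`. -/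
def Bset (S : A → List A) : Set A := {a | ∃ M : ℕ, ∀ n, (iter S n [a]).length ≤ M}

/-- The set `C = A ∖ B`. -/
def Cset (S : A → List A) : Set A := (Bset S)ᶜ

open Classical in
/-- `tilde S w` is the word obtained from `w` by deleting all letters of `B`. -/
noncomputable def tilde (S : A → List A) (w : List A) : List A :=
  w.filter fun x => decide (x ∈ Cset S)

/-- The induced substitution `S̃`. -/
noncomputable def tildeS (S : A → List A) : A → List A := fun x => tilde S (S x)




lemma flatMap_castZ (l : List ℕ) : (l.flatMap fun a : ℕ => [(a:ℤ)]) = l.map (Nat.cast : ℕ → ℤ) := by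
  induction l with
  | nil => rfl
  | cons a l ih => rw [List.flatMap_cons, List.map_cons, ih]; rfl

lemma coekill {β : Type*} (f : ℤ → β) (n : ℕ) :
    ((List.range n).map fun i => f i) = (List.range n).map (fun i : ℕ => f (i:ℤ)) := by
  show List.map _ ((List.range n).flatMap fun a : ℕ => [(a:ℤ)]) = _
  rw [flatMap_castZ, List.map_map]
  rfl

/-- window of length ℓ starting at a -/
def win (ω : ℤ → A) (a : ℤ) (ℓ : ℕ) : List A := (List.range ℓ).map fun i : ℕ => ω (a + (i:ℤ))

@[simp] lemma win_length (ω : ℤ → A) (a : ℤ) (ℓ : ℕ) : (win ω a ℓ).length = ℓ := by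
  simp [win]

def OccursAt (v : List A) (ω : ℤ → A) (q : ℤ) : Prop := win ω q v.length = v

lemma isFactor_iff_occursAt {v : List A} {ω : ℤ → A} :
    IsFactor v ω ↔ ∃ q, OccursAt v ω q := by
  unfold IsFactor OccursAt win
  constructor
  · rintro ⟨k, hk⟩
    exact ⟨k, ((hk.trans (coekill (fun j : ℤ => ω (k + j)) v.length)).symm : _)⟩
  · rintro ⟨q, hq⟩
    exact ⟨q, ((coekill (fun j : ℤ => ω (q + j)) v.length).trans hq).symm⟩

lemma win_add (ω : ℤ → A) (a : ℤ) (m n : ℕ) :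
    win ω a (m + n) = win ω a m ++ win ω (a + m) n := by
  unfold win
  rw [List.range_add, List.map_append, List.map_map]
  congr 1
  apply List.map_congr_left
  intro i _
  simp only [Function.comp_apply]
  congr 1
  push_cast
  ring

lemma win_shift (ω : ℤ → A) (k a : ℤ) (ℓ : ℕ) :
    win (shift k ω) a ℓ = win ω (a + k) ℓ := by
  unfold win shift
  apply List.map_congr_left
  intro i _
  congr 1
  ring

lemma occursAt_infix {v W : List A} {ω : ℤ → A} {s : ℤ}
    (hW : OccursAt W ω s) (hv : v <:+: W) : ∃ q, OccursAt v ω q ∧ s ≤ q ∧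
      q + v.length ≤ s + W.length := by
  obtain ⟨L, R, hLR⟩ := hv
  have hlen : W.length = L.length + (v.length + R.length) := by
    have := congrArg List.length hLR
    simp only [List.length_append] at this
    omega
  refine ⟨s + L.length, ?_, by omega, by omega⟩
  unfold OccursAt at hW ⊢
  rw [hlen, win_add, win_add] at hW
  rw [List.append_assoc] at hLR
  rw [← hLR] at hW
  have h1 := (List.append_inj hW (by simp)).2
  exact (List.append_inj h1 (by simp)).1

lemma occursAt_sub {v W : List A} {ω : ℤ → A} {s t : ℤ}
    (hW : OccursAt W ω s) (hv : OccursAt v ω t) (h1 : s ≤ t)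
    (h2 : t + v.length ≤ s + W.length) : v <:+: W := by
  unfold OccursAt at hW hv
  refine ⟨win ω s (t-s).toNat, win ω (t + v.length) (s + W.length - t - v.length).toNat, ?_⟩
  have e1 : W.length = (t-s).toNat + (v.length + (s + W.length - t - v.length).toNat) := by
    omega
  conv_rhs => rw [← hW, e1, win_add, win_add]
  have e2 : s + (((t-s).toNat : ℕ) : ℤ) = t := by omega
  rw [e2, hv, ← List.append_assoc]

lemma occursAt_shift {v : List A} {ω : ℤ → A} {q k : ℤ} :
    OccursAt v (shift k ω) q ↔ OccursAt v ω (q + k) := by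
  unfold OccursAt
  rw [win_shift]

lemma isFactor_shift {w : List A} {ω : ℤ → A} (k : ℤ) :
    IsFactor w (shift k ω) ↔ IsFactor w ω := by
  rw [isFactor_iff_occursAt, isFactor_iff_occursAt]
  constructor
  · rintro ⟨q, hq⟩; exact ⟨q + k, occursAt_shift.mp hq⟩
  · rintro ⟨q, hq⟩; exact ⟨q - k, occursAt_shift.mpr (by simpa using hq)⟩

lemma occursAt_win {ω : ℤ → A} (a : ℤ) (ℓ : ℕ) : OccursAt (win ω a ℓ) ω a := by
  unfold OccursAt
  rw [win_length]


-- ===== Section 4: pointwise occurrence, topology, bounded gaps =====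


section words
variable (S : A → List A)
variable (S : A → List A)

lemma subst_append (x y : List A) : subst S (x ++ y) = subst S x ++ subst S y := by
  simp [subst]

lemma iter_zero (w : List A) : iter S 0 w = w := rfl

lemma iter_succ (n : ℕ) (w : List A) : iter S (n+1) w = subst S (iter S n w) := by
  simp [iter, Function.iterate_succ_apply']

lemma iter_succ' (n : ℕ) (w : List A) : iter S (n+1) w = iter S n (subst S w) := by
  simp [iter, Function.iterate_succ_apply]

lemma iter_add (m n : ℕ) (w : List A) : iter S (m + n) w = iter S m (iter S n w) := by
  simp [iter, Function.iterate_add_apply]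

lemma iter_append (n : ℕ) (x y : List A) :
    iter S n (x ++ y) = iter S n x ++ iter S n y := by
  induction n with
  | zero => rfl
  | succ n ih => rw [iter_succ, iter_succ, iter_succ, ih, subst_append]

lemma iter_infix (n : ℕ) {x y : List A} (h : x <:+: y) :
    iter S n x <:+: iter S n y := by
  obtain ⟨l, r, rfl⟩ := h
  rw [iter_append, iter_append]
  exact ⟨iter S n l, iter S n r, rfl⟩

lemma iter_flatMap (n : ℕ) (w : List A) :
    iter S n w = w.flatMap (fun a => iter S n [a]) := by
  induction w with
  | nil => induction n with
    | zero => rfl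
    | succ n ih => rw [iter_succ, ih]; rfl
  | cons a w ih =>
      have : (a :: w) = [a] ++ w := rfl
      rw [this, iter_append, List.flatMap_append, ih]
      simp

lemma WS_factor_closed {w w' : List A} (h : w' <:+: w) (hw : w ∈ WS S) : w' ∈ WS S := by
  obtain ⟨a, n, hn⟩ := hw
  exact ⟨a, n, h.trans hn⟩

lemma WS_iter {w : List A} (n : ℕ) (hw : w ∈ WS S) : iter S n w ∈ WS S := by
  obtain ⟨a, m, hm⟩ := hw
  exact ⟨a, n + m, by rw [iter_add]; exact iter_infix S n hm⟩

lemma length_subst_le (K : ℕ) (hK : ∀ a, (S a).length ≤ K) (w : List A) :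
    (subst S w).length ≤ K * w.length := by
  induction w with
  | nil => simp [subst]
  | cons a w ih =>
      have : subst S (a :: w) = S a ++ subst S w := rfl
      rw [this]
      simp only [List.length_append, List.length_cons]
      calc (S a).length + (subst S w).length ≤ K + K * w.length :=
        Nat.add_le_add (hK a) ih
      _ = K * (w.length + 1) := by ring

lemma length_iter_le (K : ℕ) (hK : ∀ a, (S a).length ≤ K) (n : ℕ) (w : List A) :
    (iter S n w).length ≤ K ^ n * w.length := by
  induction n with
  | zero => simp [iter]
  | succ n ih =>
      rw [iter_succ]
      calc (subst S (iter S n w)).length ≤ K * (iter S n w).length :=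
        length_subst_le S K hK _
      _ ≤ K * (K ^ n * w.length) := Nat.mul_le_mul_left K ih
      _ = K ^ (n+1) * w.length := by ring

end words



lemma length_flatMap_le (f : A → List A) (k : ℕ) (hk : ∀ a, (f a).length ≤ k)
    (Y : List A) : (Y.flatMap f).length ≤ Y.length * k := by
  induction Y with
  | nil => simp
  | cons a Y ih =>
      rw [List.flatMap_cons, List.length_append, List.length_cons]
      calc (f a).length + (Y.flatMap f).length ≤ k + Y.length * k :=
        Nat.add_le_add (hk a) ih
      _ = (Y.length + 1) * k := by ring

lemma block_pre (f : A → List A) (k : ℕ) (hk : ∀ a, (f a).length ≤ k) :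
    ∀ (Y L M : List A), Y.flatMap f = L ++ M →
    ∃ Y', Y' <:+ Y ∧ (Y'.flatMap f) <:+ M ∧ M.length ≤ (Y'.flatMap f).length + k := by
  intro Y
  induction Y with
  | nil =>
      intro L M h
      simp only [List.flatMap_nil] at h
      have hM : M = [] := by
        have := congrArg List.length h
        rw [List.length_append] at this
        simp at this
        exact List.eq_nil_of_length_eq_zero (by omega)
      exact ⟨[], List.nil_suffix, by simp [hM], by simp [hM]⟩
  | cons a Y ih =>
      intro L M h
      rw [List.flatMap_cons] at h
      rcases List.append_eq_append_iff.mp h with ⟨a', ha1, ha2⟩ | ⟨c', hc1, hc2⟩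
      · obtain ⟨Y', h1, h2, h3⟩ := ih a' M ha2
        exact ⟨Y', h1.trans (List.suffix_cons a Y), h2, h3⟩
      · refine ⟨Y, List.suffix_cons a Y, ⟨c', hc2.symm⟩, ?_⟩
        have h1 : c'.length ≤ k := by
          have h2 := congrArg List.length hc1
          rw [List.length_append] at h2
          have := hk a
          omega
        have h3 := congrArg List.length hc2
        rw [List.length_append] at h3
        omega

lemma block_suf (f : A → List A) (k : ℕ) (hk : ∀ a, (f a).length ≤ k) :
    ∀ (Y M R : List A), Y.flatMap f = M ++ R →
    ∃ Y', Y' <+: Y ∧ (Y'.flatMap f) <+: M ∧ M.length ≤ (Y'.flatMap f).length + k := by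
  intro Y
  induction Y with
  | nil =>
      intro M R h
      simp only [List.flatMap_nil] at h
      have hM : M = [] := by
        have := congrArg List.length h
        rw [List.length_append] at this
        simp at this
        exact List.eq_nil_of_length_eq_zero (by omega)
      exact ⟨[], List.nil_prefix, by simp [hM], by simp [hM]⟩
  | cons a Y ih =>
      intro M R h
      rw [List.flatMap_cons] at h
      rcases List.append_eq_append_iff.mp h with ⟨a', ha1, ha2⟩ | ⟨c', hc1, hc2⟩
      · obtain ⟨Y'', h1, h2, h3⟩ := ih a' R ha2
        refine ⟨a :: Y'', List.cons_prefix_cons.mpr ⟨rfl, h1⟩, ?_, ?_⟩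
        · rw [List.flatMap_cons, ha1]
          obtain ⟨t, ht⟩ := h2
          exact ⟨t, by rw [List.append_assoc, ht]⟩
        · rw [List.flatMap_cons, ha1, List.length_append, List.length_append]
          omega
      · refine ⟨[], List.nil_prefix, by simp, ?_⟩
        have h1 : M.length ≤ (f a).length := by
          have h2 := congrArg List.length hc1
          rw [List.length_append] at h2
          omega
        have := hk a
        simp
        omega

lemma block_main (f : A → List A) (k : ℕ) (hk1 : 1 ≤ k) (hk : ∀ a, (f a).length ≤ k)
    (Y W : List A) (hW : W <:+: Y.flatMap f) (hlen : 2 * k ≤ W.length) :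
    ∃ Z, Z <:+: Y ∧ (Z.flatMap f) <:+: W ∧ W.length ≤ (Z.length + 2) * k := by
  obtain ⟨L, R, hLR⟩ := hW
  obtain ⟨Y₁, hY₁suf, hY₁inf, hY₁len⟩ :=
    block_pre f k hk Y L (W ++ R) (by rw [← hLR]; simp)
  obtain ⟨P, hP⟩ := hY₁inf
  -- hP : P ++ Y₁.flatMap f = W ++ R
  rcases List.append_eq_append_iff.mp hP with ⟨a', ha1, ha2⟩ | ⟨c', hc1, hc2⟩
  · -- W = P ++ a', flatMap Y₁ = a' ++ R : good case
    obtain ⟨Z, hZpre, hZpre2, hZlen⟩ := block_suf f k hk Y₁ a' R ha2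
    have hWR := congrArg List.length hP
    rw [List.length_append, List.length_append] at hWR
    rw [List.length_append] at hY₁len
    have hPlen : P.length ≤ k := by omega
    refine ⟨Z, hZpre.isInfix.trans hY₁suf.isInfix, ?_, ?_⟩
    · obtain ⟨t, ht⟩ := hZpre2
      exact ⟨P, t, by rw [ha1, ← ht, List.append_assoc]⟩
    · have h1 : (Z.flatMap f).length ≤ Z.length * k := length_flatMap_le f k hk Z
      have h2 := congrArg List.length ha1
      rw [List.length_append] at h2
      calc W.length = P.length + a'.length := h2
        _ ≤ k + ((Z.flatMap f).length + k) := by omega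
        _ ≤ k + (Z.length * k + k) := by omega
        _ = (Z.length + 2) * k := by ring
  · -- degenerate: P = W ++ c', R = c' ++ flatMap Y₁ : contradiction with lengths
    exfalso
    have l1 := congrArg List.length hc1
    have l2 := congrArg List.length hc2
    rw [List.length_append] at l1 l2
    rw [List.length_append] at hY₁len
    omega



lemma win_getElem (ω : ℤ → A) (a : ℤ) (ℓ : ℕ) (i : ℕ) (h : i < ℓ) :
    (win ω a ℓ)[i]'(by simpa using h) = ω (a + i) := by
  simp [win]

lemma occursAt_iff {v : List A} {ω : ℤ → A} {q : ℤ} :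
    OccursAt v ω q ↔ ∀ (i : ℕ) (h : i < v.length), ω (q + i) = v[i] := by
  constructor
  · intro h i hi
    have e := win_getElem ω q v.length i hi
    rw [← e]
    exact List.getElem_of_eq h (by simpa using hi)
  · intro h
    unfold OccursAt
    apply List.ext_getElem (by simp)
    intro i h1 h2
    rw [win_getElem ω q v.length i h2]
    exact h i h2

lemma shift_mem_OmegaS {S : A → List A} {ω : ℤ → A} (h : ω ∈ OmegaS S) (k : ℤ) :
    shift k ω ∈ OmegaS S := by
  intro w hw
  exact h w ((isFactor_shift k).mp hw)

lemma win_mem_WS {S : A → List A} {ω : ℤ → A} (h : ω ∈ OmegaS S) (a : ℤ) (ℓ : ℕ) :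
    win ω a ℓ ∈ WS S := by
  apply h
  rw [isFactor_iff_occursAt]
  exact ⟨a, occursAt_win a ℓ⟩

section topo

variable [TopologicalSpace A] [DiscreteTopology A] [Finite A]
set_option linter.unusedSectionVars false

lemma isOpen_occursAt (v : List A) (q : ℤ) : IsOpen {ω : ℤ → A | OccursAt v ω q} := by
  have : {ω : ℤ → A | OccursAt v ω q} =
      ⋂ i : Fin v.length, {ω : ℤ → A | ω (q + (i:ℕ)) = v[(i:ℕ)]} := by
    ext ω
    simp only [Set.mem_setOf_eq, Set.mem_iInter, occursAt_iff]
    exact ⟨fun h i => h i i.2, fun h i hi => h ⟨i, hi⟩⟩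
  rw [this]
  apply isOpen_iInter_of_finite
  intro i
  exact (continuous_apply (A := fun _ : ℤ => A) (q + ((i:ℕ):ℤ))).isOpen_preimage ({v[(i:ℕ)]} : Set A) (isOpen_discrete _)

lemma isClosed_occursAt (v : List A) (q : ℤ) : IsClosed {ω : ℤ → A | OccursAt v ω q} := by
  have : {ω : ℤ → A | OccursAt v ω q} =
      ⋂ i : Fin v.length, {ω : ℤ → A | ω (q + (i:ℕ)) = v[(i:ℕ)]} := by
    ext ω
    simp only [Set.mem_setOf_eq, Set.mem_iInter, occursAt_iff]
    exact ⟨fun h i => h i i.2, fun h i hi => h ⟨i, hi⟩⟩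
  rw [this]
  apply isClosed_iInter
  intro i
  exact IsClosed.preimage (continuous_apply (A := fun _ : ℤ => A) (q + ((i:ℕ):ℤ))) (isClosed_singleton (x := v[(i:ℕ)]))

lemma isClosed_OmegaS (S : A → List A) : IsClosed (OmegaS S) := by
  have : OmegaS S = ⋂ (w : List A) (q : ℤ), {ω : ℤ → A | OccursAt w ω q → w ∈ WS S} := by
    ext ω
    simp only [Set.mem_iInter, Set.mem_setOf_eq]
    constructor
    · intro h w q hq
      exact h w (isFactor_iff_occursAt.mpr ⟨q, hq⟩)
    · intro h w hw
      obtain ⟨q, hq⟩ := isFactor_iff_occursAt.mp hw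
      exact h w q hq
  rw [this]
  apply isClosed_iInter; intro w
  apply isClosed_iInter; intro q
  by_cases hw : w ∈ WS S
  · have : {ω : ℤ → A | OccursAt w ω q → w ∈ WS S} = Set.univ := by
      ext ω; simp [hw]
    rw [this]; exact isClosed_univ
  · have : {ω : ℤ → A | OccursAt w ω q → w ∈ WS S} = {ω : ℤ → A | OccursAt w ω q}ᶜ := by
      ext ω; simp [hw]
    rw [this]
    exact (isOpen_occursAt w q).isClosed_compl

lemma minimal_bddGaps {S : A → List A} (hC : CondC S) (hmin : Minimal S)
    {w : List A} (hw : w ∈ WS S) :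
    ∃ R : ℕ, 1 ≤ R ∧ ∀ W ∈ WS S, R ≤ W.length → w <:+: W := by
  by_contra hcon
  push_neg at hcon
  -- for every R there is a long word avoiding w
  have hbad : ∀ R : ℕ, ∃ W ∈ WS S, (2*R + w.length + 1 ≤ W.length) ∧ ¬ w <:+: W := by
    intro R
    obtain ⟨W, hW1, hW2, hW3⟩ := hcon (2*R + w.length + 1) (by omega)
    exact ⟨W, hW1, hW2, hW3⟩
  choose Wb hWb1 hWb2 hWb3 using hbad
  -- realize each inside Ω and recenter
  have hreal : ∀ R : ℕ, ∃ η ∈ OmegaS S, OccursAt (Wb R) η (-(R:ℤ)) := by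
    intro R
    have := hWb1 R
    rw [hC] at this
    obtain ⟨ω, hω, hfac⟩ := this
    obtain ⟨q, hq⟩ := isFactor_iff_occursAt.mp hfac
    refine ⟨shift (q + R) ω, shift_mem_OmegaS hω _, ?_⟩
    rw [occursAt_shift]
    convert hq using 2
    ring
  choose η hη1 hη2 using hreal
  have hfree : ∀ (R : ℕ) (t : ℤ), -(R:ℤ) ≤ t → t ≤ R → ¬ OccursAt w (η R) t := by
    intro R t h1 h2 hocc
    apply hWb3 R
    apply occursAt_sub (hη2 R) hocc h1
    have := hWb2 R
    omega
  -- extract convergent subsequence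
  have hcomp : IsCompact (OmegaS S) := (isClosed_OmegaS S).isCompact
  obtain ⟨etaL, hetaL, φ, hφ, hconv⟩ := hcomp.isSeqCompact hη1
  -- minimality: w occurs in etaL
  have hwo : w ∈ WOmega S := by rw [← hC]; exact hw
  obtain ⟨ω₀, hω₀, hfac₀⟩ := hwo
  obtain ⟨k₀, hk₀⟩ := isFactor_iff_occursAt.mp hfac₀
  have hcl := hmin etaL hetaL hω₀
  rw [mem_closure_iff] at hcl
  obtain ⟨ωU, hωU, ⟨k, rfl⟩⟩ := hcl {ω' | OccursAt w ω' k₀} (isOpen_occursAt w k₀) hk₀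
  have hoccL : OccursAt w etaL (k₀ + k) := occursAt_shift.mp hωU
  set t₀ := k₀ + k with ht₀
  -- eventual agreement on the window
  have hag : ∀ᶠ i in atTop, ∀ j : Fin w.length, (η (φ i)) (t₀ + (j:ℕ)) = etaL (t₀ + (j:ℕ)) := by
    rw [Filter.eventually_all]
    intro j
    have h1 : Tendsto (fun i => (η (φ i)) (t₀ + (j:ℕ))) atTop (nhds (etaL (t₀ + (j:ℕ)))) :=
      ((continuous_apply (t₀ + ((j:ℕ):ℤ))).continuousAt.tendsto).comp hconv
    rw [nhds_discrete, Filter.tendsto_pure] at h1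
    exact h1
  have hlarge : ∀ᶠ i in atTop, t₀.natAbs + w.length ≤ φ i :=
    Filter.eventually_atTop.mpr ⟨t₀.natAbs + w.length, fun i hi => hi.trans hφ.le_apply⟩
  obtain ⟨i, hi1, hi2⟩ := (hag.and hlarge).exists
  apply hfree (φ i) t₀ (by omega) (by omega)
  rw [occursAt_iff]
  intro j hj
  rw [hi1 ⟨j, hj⟩]
  exact occursAt_iff.mp hoccL j hj

end topo



-- ===== Section 5: key combinatorial lemma =====

section combin

variable [TopologicalSpace A] [DiscreteTopology A] [Fintype A]
set_option linter.unusedSectionVars false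

/-- max length of S^n over letters -/
noncomputable def Kmax (S : A → List A) (n : ℕ) : ℕ :=
  Finset.univ.sup (fun a : A => (iter S n [a]).length)

noncomputable def Kone (S : A → List A) : ℕ := Finset.univ.sup (fun a : A => (S a).length)

lemma le_Kone (S : A → List A) (a : A) : (S a).length ≤ Kone S :=
  Finset.le_sup (f := fun a : A => (S a).length) (Finset.mem_univ a)

lemma le_Kmax (S : A → List A) (n : ℕ) (a : A) : (iter S n [a]).length ≤ Kmax S n :=
  Finset.le_sup (f := fun a : A => (iter S n [a]).length) (Finset.mem_univ a)

lemma iter_len_le (S : A → List A) (n : ℕ) (w : List A) :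
    (iter S n w).length ≤ (Kone S)^n * w.length :=
  length_iter_le S (Kone S) (le_Kone S) n w

lemma WS_nonempty_letter (S : A → List A) (a : A) : [a] ∈ WS S :=
  ⟨a, 0, List.infix_refl _⟩

lemma WS_iter_letter (S : A → List A) (a : A) (n : ℕ) : iter S n [a] ∈ WS S :=
  ⟨a, n, List.infix_refl _⟩

lemma Kone_two {S : A → List A} {e : A}
    (he : ∀ M : ℕ, ∃ n, M < (iter S n [e]).length) : 2 ≤ Kone S := by
  by_contra h
  push_neg at h
  obtain ⟨n, hn⟩ := he 1
  have h2 := iter_len_le S n [e]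
  have h3 : (Kone S)^n ≤ 1 := by
    calc (Kone S)^n ≤ 1^n := Nat.pow_le_pow_left (by omega) n
    _ = 1 := one_pow n
  simp only [List.length_singleton, mul_one] at h2
  omega

/-- comparability of growth with the letter e -/
lemma growth_comp {S : A → List A} (hC : CondC S) (hmin : Minimal S) (hK2 : 2 ≤ Kone S) {e : A}
    (he : ∀ M : ℕ, ∃ n, M < (iter S n [e]).length) :
    ∃ Cc : ℕ, ∀ n, Kmax S n ≤ Cc * (iter S n [e]).length := by
  have hma : ∀ a : A, ∃ m : ℕ, [a] <:+: iter S m [e] := by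
    intro a
    obtain ⟨Ra, _, hRa⟩ := minimal_bddGaps hC hmin (WS_nonempty_letter S a)
    obtain ⟨m, hm⟩ := he Ra
    exact ⟨m, hRa _ (WS_iter_letter S e m) (by omega)⟩
  choose m hm using hma
  set M0 := Finset.univ.sup m with hM0
  refine ⟨(Kone S)^M0, fun n => ?_⟩
  apply Finset.sup_le
  intro a _
  have h1 : iter S n [a] <:+: iter S (n + m a) [e] := by
    rw [iter_add S]
    exact iter_infix S n (hm a)
  have h2 : (iter S n [a]).length ≤ (iter S (n + m a) [e]).length := h1.length_le
  have h3 : iter S (n + m a) [e] = iter S (m a) (iter S n [e]) := by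
    rw [Nat.add_comm]; exact iter_add S (m a) n [e]
  have h4 : (iter S (n + m a) [e]).length ≤ (Kone S)^(m a) * (iter S n [e]).length := by
    rw [h3]; exact iter_len_le S (m a) _
  have h5 : (Kone S)^(m a) ≤ (Kone S)^M0 := by
    apply Nat.pow_le_pow_right (by omega)
    exact Finset.le_sup (f := m) (Finset.mem_univ a)
  calc (iter S n [a]).length ≤ (Kone S)^(m a) * (iter S n [e]).length := h2.trans h4
  _ ≤ (Kone S)^M0 * (iter S n [e]).length := Nat.mul_le_mul_right _ h5

/-- the star lemma: every long enough word of WS contains S^n(x) -/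
lemma star {S : A → List A} (hC : CondC S) (hmin : Minimal S)
    (hK2 : 2 ≤ Kone S)
    {x : List A} (hx : x ∈ WS S) :
    ∃ R : ℕ, 1 ≤ R ∧ ∀ n : ℕ, 1 ≤ Kmax S n →
      ∀ W ∈ WS S, (R + 2) * Kmax S n ≤ W.length → iter S n x <:+: W := by
  obtain ⟨R, hR1, hR⟩ := minimal_bddGaps hC hmin hx
  refine ⟨R, hR1, fun n hKn W hWmem hWlen => ?_⟩
  -- extend W inside an ω
  have hWmem' := hWmem
  rw [hC] at hWmem'
  obtain ⟨ω, hω, hfac⟩ := hWmem'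
  obtain ⟨qW, hqW⟩ := isFactor_iff_occursAt.mp hfac
  set L' : ℕ := max W.length ((Kone S)^n + 1) with hL'
  set W' : List A := win ω qW L' with hW'
  have hW'mem : W' ∈ WS S := win_mem_WS hω qW L'
  have hWW' : W <:+: W' := by
    apply occursAt_sub (occursAt_win qW L') hqW (le_refl _)
    rw [win_length]
    have : W.length ≤ L' := le_max_left _ _
    omega
  obtain ⟨a, mm, hmm⟩ := hW'mem
  have hmn : n ≤ mm := by
    have h1 : W'.length ≤ (iter S mm [a]).length := hmm.length_le
    have h2 : (iter S mm [a]).length ≤ (Kone S)^mm := by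
      have := iter_len_le S mm [a]
      simpa using this
    have h3 : (Kone S)^n + 1 ≤ W'.length := by
      rw [hW', win_length]
      exact le_max_right _ _
    have h4 : (Kone S)^n < (Kone S)^mm := by omega
    by_contra hcon
    push_neg at hcon
    have := Nat.pow_le_pow_right (by omega : 1 ≤ Kone S) hcon.le
    omega
  -- desubstitute
  set Y : List A := iter S (mm - n) [a] with hY
  have hYiter : iter S n Y = iter S mm [a] := by
    rw [hY, ← iter_add S, Nat.add_sub_cancel' hmn]
  have hWY : W <:+: Y.flatMap (fun b => iter S n [b]) := by
    rw [← iter_flatMap, hYiter]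
    exact (hWW'.trans hmm)
  obtain ⟨Z, hZY, hZW, hZlen⟩ := block_main (fun b => iter S n [b]) (Kmax S n) hKn
    (fun b => le_Kmax S n b) Y W hWY
    (le_trans (Nat.mul_le_mul_right _ (by omega : 2 ≤ R + 2)) hWlen)
  have hZmem : Z ∈ WS S := ⟨a, mm - n, hZY⟩
  have hZlong : R ≤ Z.length := by
    have h6 : (R + 2) * Kmax S n ≤ (Z.length + 2) * Kmax S n := hWlen.trans hZlen
    have h7 : R + 2 ≤ Z.length + 2 := Nat.le_of_mul_le_mul_right h6 (by omega)
    omega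
  have hxZ : x <:+: Z := hR Z hZmem hZlong
  calc iter S n x <:+: iter S n Z := iter_infix S n hxZ
  _ = Z.flatMap (fun b => iter S n [b]) := iter_flatMap S n Z
  _ <:+: W := hZW

end combin



-- ===== Section 6: periodicity from cubes =====

/-- ω has period p on the closed window [c-p, c+p] -/
def Per (ω : ℤ → A) (c : ℤ) (p : ℕ) : Prop :=
  ∀ m : ℤ, c - p ≤ m → m ≤ c + p → ω (m + p) = ω m

/-- the Gordon set -/
def Gset (A : Type*) : Set (ℤ → A) := {ω | ∃ c : ℤ, ∀ N : ℕ, ∃ p : ℕ, N ≤ p ∧ Per ω c p}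

lemma per_shift {ω : ℤ → A} {c : ℤ} {p : ℕ} :
    Per (shift 1 ω) c p ↔ Per ω (c + 1) p := by
  unfold Per shift
  constructor
  · intro h m h1 h2
    have := h (m - 1) (by omega) (by omega)
    simpa [sub_add_cancel, add_comm, add_left_comm, add_assoc] using this
  · intro h m h1 h2
    have := h (m + 1) (by omega) (by omega)
    convert this using 2 <;> ring

lemma Gset_shift_inv : (shift 1) ⁻¹' (Gset A) = Gset A := by
  ext ω
  simp only [Set.mem_preimage, Gset, Set.mem_setOf_eq]
  constructor
  · rintro ⟨c, hc⟩
    refine ⟨c + 1, fun N => ?_⟩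
    obtain ⟨p, hp1, hp2⟩ := hc N
    exact ⟨p, hp1, per_shift.mp hp2⟩
  · rintro ⟨c, hc⟩
    refine ⟨c - 1, fun N => ?_⟩
    obtain ⟨p, hp1, hp2⟩ := hc N
    refine ⟨p, hp1, per_shift.mpr ?_⟩
    simpa [sub_add_cancel] using hp2

lemma cube_drop_prefix {w s : List A} (hs : s <+: w) :
    ((w ++ w ++ w ++ s).drop w.length) <+: (w ++ w ++ w ++ s) := by
  obtain ⟨r, hr⟩ := hs
  have hv : w ++ w ++ w ++ s = w ++ (w ++ w ++ s) := by simp [List.append_assoc]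
  rw [hv, List.drop_left]
  refine ⟨r ++ s, ?_⟩
  rw [← hr]
  simp [List.append_assoc]

lemma cube_periodic {w s : List A} (hs : s <+: w) (i : ℕ)
    (hi : i + w.length < (w ++ w ++ w ++ s).length) :
    (w ++ w ++ w ++ s)[i + w.length]'hi
      = (w ++ w ++ w ++ s)[i]'(by omega) := by
  have hpre := cube_drop_prefix hs
  have hlen : i < ((w ++ w ++ w ++ s).drop w.length).length := by
    rw [List.length_drop]
    omega
  have h1 := hpre.getElem hlen
  rw [List.getElem_drop] at h1
  rw [← h1]
  congr 1
  omega

lemma per_of_cube_occ {w s : List A} (hs : s <+: w) {ω : ℤ → A} {q c : ℤ}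
    (hocc : OccursAt (w ++ w ++ w ++ s) ω q)
    (h1 : q ≤ c - w.length) (h2 : c + 1 ≤ q + w.length + s.length) :
    Per ω c w.length := by
  intro m hm1 hm2
  set v := w ++ w ++ w ++ s with hv
  have hvlen : v.length = w.length + w.length + w.length + s.length := by
    simp [hv]; omega
  have hip : (m - q).toNat + w.length < v.length := by omega
  have e1 : ω (m + w.length) = v[(m - q).toNat + w.length]'hip := by
    have := occursAt_iff.mp hocc ((m - q).toNat + w.length) hip
    rw [← this]
    congr 1
    push_cast
    omega
  have e2 : ω m = v[(m - q).toNat]'(by omega) := by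
    have := occursAt_iff.mp hocc ((m - q).toNat) (by omega)
    rw [← this]
    congr 1
    omega
  rw [e1, e2]
  exact cube_periodic hs _ hip



-- ===== Section 7: measure theory =====

section meas

variable [MeasurableSpace A] [MeasurableSingletonClass A] [Countable A]
set_option linter.unusedSectionVars false

lemma measurable_shift (k : ℤ) : Measurable (shift k : (ℤ → A) → (ℤ → A)) :=
  measurable_pi_lambda _ (fun n => measurable_pi_apply (n + k))

lemma shift_iterate (k : ℕ) : (shift 1 : (ℤ → A) → _)^[k] = shift (k : ℤ) := by
  induction k with
  | zero => funext ω n; simp [shift]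
  | succ k ih =>
      funext ω n
      rw [Function.iterate_succ', Function.comp_apply, ih]
      show (shift k ω) (n + 1) = ω (n + (k+1 : ℕ))
      unfold shift
      congr 1
      push_cast
      ring

lemma map_shift_eq {μ : Measure (ℤ → A)} (hinv : μ.map (shift 1) = μ) (k : ℕ) :
    μ.map (shift (k : ℤ)) = μ := by
  rw [← shift_iterate]
  induction k with
  | zero => simp
  | succ k ih =>
      rw [Function.iterate_succ', ← Measure.map_map (measurable_shift 1)
        (by rw [shift_iterate]; exact measurable_shift _), ih, hinv]

lemma measure_shift_preimage {μ : Measure (ℤ → A)} (hinv : μ.map (shift 1) = μ) (k : ℕ)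
    {B : Set (ℤ → A)} (hB : MeasurableSet B) : μ ((shift (k : ℤ)) ⁻¹' B) = μ B := by
  conv_rhs => rw [← map_shift_eq hinv k]
  rw [Measure.map_apply (measurable_shift _) hB]

lemma measurableSet_eq_apply (t : ℤ) (a : A) : MeasurableSet {ω : ℤ → A | ω t = a} := by
  have : {ω : ℤ → A | ω t = a} = (fun ω : ℤ → A => ω t) ⁻¹' {a} := rfl
  rw [this]
  exact measurable_pi_apply t (measurableSet_singleton a)

lemma measurableSet_occursAt (v : List A) (q : ℤ) :
    MeasurableSet {ω : ℤ → A | OccursAt v ω q} := by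
  have : {ω : ℤ → A | OccursAt v ω q} =
      ⋂ i : Fin v.length, {ω : ℤ → A | ω (q + ((i:ℕ):ℤ)) = v[(i:ℕ)]} := by
    ext ω
    simp only [Set.mem_setOf_eq, Set.mem_iInter, occursAt_iff]
    exact ⟨fun h i => h i i.2, fun h i hi => h ⟨i, hi⟩⟩
  rw [this]
  exact MeasurableSet.iInter (fun i => measurableSet_eq_apply _ _)

lemma measurableSet_eq_pair (t u : ℤ) : MeasurableSet {ω : ℤ → A | ω t = ω u} := by
  have : {ω : ℤ → A | ω t = ω u} = ⋃ a : A, ({ω : ℤ → A | ω t = a} ∩ {ω : ℤ → A | ω u = a}) := by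
    ext ω
    simp only [Set.mem_setOf_eq, Set.mem_iUnion, Set.mem_inter_iff]
    exact ⟨fun h => ⟨ω u, h, rfl⟩, fun ⟨a, h1, h2⟩ => h1.trans h2.symm⟩
  rw [this]
  exact MeasurableSet.iUnion (fun a =>
    (measurableSet_eq_apply t a).inter (measurableSet_eq_apply u a))

lemma measurableSet_per (c : ℤ) (p : ℕ) : MeasurableSet {ω : ℤ → A | Per ω c p} := by
  have : {ω : ℤ → A | Per ω c p} =
      ⋂ m : ℤ, ⋂ (_ : c - p ≤ m ∧ m ≤ c + p), {ω : ℤ → A | ω (m + p) = ω m} := by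
    ext ω
    simp only [Set.mem_setOf_eq, Set.mem_iInter]
    exact ⟨fun h m hm => h m hm.1 hm.2, fun h m h1 h2 => h m ⟨h1, h2⟩⟩
  rw [this]
  exact MeasurableSet.iInter (fun m => MeasurableSet.iInter
    (fun _ => measurableSet_eq_pair _ _))

lemma measurableSet_Gset : MeasurableSet (Gset A) := by
  have : Gset A = ⋃ c : ℤ, ⋂ N : ℕ, ⋃ p : ℕ, ⋃ (_ : N ≤ p), {ω : ℤ → A | Per ω c p} := by
    ext ω
    simp only [Gset, Set.mem_setOf_eq, Set.mem_iUnion, Set.mem_iInter]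
    constructor
    · rintro ⟨c, hc⟩
      exact ⟨c, fun N => by obtain ⟨p, h1, h2⟩ := hc N; exact ⟨p, h1, h2⟩⟩
    · rintro ⟨c, hc⟩
      exact ⟨c, fun N => by obtain ⟨p, h1, h2⟩ := hc N; exact ⟨p, h1, h2⟩⟩
  rw [this]
  exact MeasurableSet.iUnion fun c => MeasurableSet.iInter fun N =>
    MeasurableSet.iUnion fun p => MeasurableSet.iUnion fun _ => measurableSet_per c p

lemma measurableSet_OmegaS (S : A → List A) : MeasurableSet (OmegaS S) := by
  have : OmegaS S = ⋂ (w : List A) (q : ℤ), {ω : ℤ → A | OccursAt w ω q → w ∈ WS S} := by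
    ext ω
    simp only [Set.mem_iInter, Set.mem_setOf_eq]
    constructor
    · intro h w q hq
      exact h w (isFactor_iff_occursAt.mpr ⟨q, hq⟩)
    · intro h w hw
      obtain ⟨q, hq⟩ := isFactor_iff_occursAt.mp hw
      exact h w q hq
  rw [this]
  refine MeasurableSet.iInter fun w => MeasurableSet.iInter fun q => ?_
  by_cases hw : w ∈ WS S
  · have : {ω : ℤ → A | OccursAt w ω q → w ∈ WS S} = Set.univ := by
      ext ω; simp [hw]
    rw [this]; exact MeasurableSet.univ
  · have : {ω : ℤ → A | OccursAt w ω q → w ∈ WS S} = {ω : ℤ → A | OccursAt w ω q}ᶜ := by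
      ext ω; simp [hw]
    rw [this]
    exact (measurableSet_occursAt w q).compl

lemma counting_bound {μ : Measure (ℤ → A)} [IsProbabilityMeasure μ]
    (hinv : μ.map (shift 1) = μ) {Om : Set (ℤ → A)} (hOmae : ∀ᵐ ω ∂μ, ω ∈ Om)
    {B : Set (ℤ → A)} (hB : MeasurableSet B) (D s : ℕ)
    (hcount : ∀ ω ∈ Om, ∃ k₀ : ℕ, k₀ + s ≤ D ∧ ∀ j, j < s → shift ((k₀ + j : ℕ) : ℤ) ω ∈ B) :
    (s : ENNReal) ≤ D * μ B := by
  have key : (s : ENNReal) ≤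
      ∫⁻ ω, ∑ k ∈ Finset.range D, ((shift ((k:ℕ):ℤ)) ⁻¹' B).indicator 1 ω ∂μ := by
    have h0 : (s : ENNReal) = ∫⁻ _, (s : ENNReal) ∂μ := by simp
    rw [h0]
    apply lintegral_mono_ae
    filter_upwards [hOmae] with ω hω
    obtain ⟨k₀, hk₀, hgood⟩ := hcount ω hω
    calc (s : ENNReal) = ∑ k ∈ Finset.Ico k₀ (k₀ + s), (1 : ENNReal) := by
          rw [Finset.sum_const, Nat.card_Ico]
          simp
    _ = ∑ k ∈ Finset.Ico k₀ (k₀ + s), ((shift ((k:ℕ):ℤ)) ⁻¹' B).indicator 1 ω := by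
          apply Finset.sum_congr rfl
          intro k hk
          rw [Finset.mem_Ico] at hk
          have : shift ((k:ℕ):ℤ) ω ∈ B := by
            have := hgood (k - k₀) (by omega)
            rwa [Nat.add_sub_cancel' hk.1] at this
          exact (Set.indicator_of_mem (show ω ∈ shift ((k:ℕ):ℤ) ⁻¹' B from this)
            (1 : (ℤ → A) → ENNReal)).symm
    _ ≤ ∑ k ∈ Finset.range D, ((shift ((k:ℕ):ℤ)) ⁻¹' B).indicator 1 ω := by
          apply Finset.sum_le_sum_of_subset
          intro k hk
          rw [Finset.mem_Ico] at hk
          rw [Finset.mem_range]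
          omega
  have h2 : ∫⁻ ω, ∑ k ∈ Finset.range D, ((shift ((k:ℕ):ℤ)) ⁻¹' B).indicator 1 ω ∂μ
      = ∑ k ∈ Finset.range D, μ ((shift ((k:ℕ):ℤ)) ⁻¹' B) := by
    rw [MeasureTheory.lintegral_finset_sum]
    · refine Finset.sum_congr rfl fun k _ => ?_
      rw [MeasureTheory.lintegral_indicator ((measurable_shift _) hB)]
      simp
    · intro k _
      exact measurable_one.indicator ((measurable_shift _) hB)
  have h3 : ∀ k : ℕ, μ ((shift ((k:ℕ):ℤ)) ⁻¹' B) = μ B :=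
    fun k => measure_shift_preimage hinv k hB
  rw [h2] at key
  calc (s : ENNReal) ≤ ∑ k ∈ Finset.range D, μ ((shift ((k:ℕ):ℤ)) ⁻¹' B) := key
  _ = ∑ _k ∈ Finset.range D, μ B := Finset.sum_congr rfl fun k _ => h3 k
  _ = D * μ B := by rw [Finset.sum_const, Finset.card_range]; simp [nsmul_eq_mul]

lemma limsup_lower_bound {μ : Measure (ℤ → A)} [IsProbabilityMeasure μ]
    (E : ℕ → Set (ℤ → A)) (hE : ∀ i, MeasurableSet (E i)) (δ : ENNReal)
    (hδ : ∀ i, δ ≤ μ (E i)) : δ ≤ μ (⋂ N : ℕ, ⋃ (i : ℕ) (_ : N ≤ i), E i) := by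
  have hanti : Antitone (fun N => ⋃ (i : ℕ) (_ : N ≤ i), E i) := by
    intro N M hNM x hx
    simp only [Set.mem_iUnion] at hx ⊢
    obtain ⟨i, hi, hxi⟩ := hx
    exact ⟨i, le_trans hNM hi, hxi⟩
  have hm : ∀ N, NullMeasurableSet (⋃ (i : ℕ) (_ : N ≤ i), E i) μ := by
    intro N
    exact (MeasurableSet.iUnion fun i => MeasurableSet.iUnion fun _ => hE i).nullMeasurableSet
  have := MeasureTheory.tendsto_measure_iInter_atTop hm hanti ⟨0, measure_ne_top μ _⟩
  apply ge_of_tendsto' this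
  intro N
  calc δ ≤ μ (E N) := hδ N
  _ ≤ μ (⋃ (i : ℕ) (_ : N ≤ i), E i) := by
      apply measure_mono
      intro x hx
      simp only [Set.mem_iUnion]
      exact ⟨N, le_refl N, hx⟩

lemma ergodic_full_measure {μ : Measure (ℤ → A)} [IsProbabilityMeasure μ]
    (hinv : μ.map (shift 1) = μ) {Om : Set (ℤ → A)} (hOmm : MeasurableSet Om)
    (hOm : μ Om = 1)
    (huniq : ∀ ν : Measure (ℤ → A), IsProbabilityMeasure ν → ν Om = 1 →
      ν.map (shift 1) = ν → ν = μ)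
    {G : Set (ℤ → A)} (hGm : MeasurableSet G) (hGinv : (shift 1) ⁻¹' G = G)
    (hGpos : 0 < μ G) : μ G = 1 := by
  have hGne : μ G ≠ 0 := hGpos.ne'
  have hGnt : μ G ≠ ⊤ := (measure_ne_top μ G)
  set ν : Measure (ℤ → A) := (μ G)⁻¹ • μ.restrict G with hν
  have hν_apply : ∀ t : Set (ℤ → A), ν t = (μ G)⁻¹ * μ (t ∩ G) := by
    intro t
    rw [hν, Measure.smul_apply, Measure.restrict_apply' hGm, smul_eq_mul]
  have hνprob : IsProbabilityMeasure ν := by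
    constructor
    rw [hν_apply, Set.univ_inter]
    exact ENNReal.inv_mul_cancel hGne hGnt
  have hνOm : ν Om = 1 := by
    rw [hν_apply]
    have hcompl : μ Omᶜ = 0 := by
      rw [measure_compl hOmm (measure_ne_top μ _), hOm]
      simp
    have h1 : μ (G ∩ Om) + μ (G \ Om) = μ G := measure_inter_add_diff G hOmm
    have h2 : μ (G \ Om) ≤ μ Omᶜ := measure_mono (fun x hx => hx.2)
    have h3 : μ (G ∩ Om) = μ G := by
      have := le_trans h2 hcompl.le
      have h4 : μ (G \ Om) = 0 := le_antisymm this zero_le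
      rw [h4, add_zero] at h1
      exact h1
    rw [Set.inter_comm Om G, h3]
    exact ENNReal.inv_mul_cancel hGne hGnt
  have hνinv : ν.map (shift 1) = ν := by
    apply Measure.ext
    intro t ht
    rw [Measure.map_apply (measurable_shift 1) ht, hν_apply, hν_apply]
    congr 1
    have hset : (shift 1) ⁻¹' t ∩ G = (shift 1) ⁻¹' (t ∩ G) := by
      conv_lhs => rw [← hGinv]
      rfl
    rw [hset]
    simpa using measure_shift_preimage hinv 1 (ht.inter hGm)
  have := huniq ν hνprob hνOm hνinv
  rw [← this, hν_apply, Set.inter_self]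
  exact ENNReal.inv_mul_cancel hGne hGnt

end meas



-- ===== Section 8: Gordon argument =====

section gordon

variable (V : ℤ → ℂ) (E : ℂ) (ψ : ℤ → ℂ)

/-- one-step transfer matrix -/
noncomputable def Amat (n : ℤ) : Matrix (Fin 2) (Fin 2) ℂ := !![E - V n, -1; 1, 0]

/-- solution vector -/
noncomputable def Phi (k : ℤ) : Fin 2 → ℂ := ![ψ (k+1), ψ k]

/-- products of transfer matrices -/
noncomputable def Tprod (j : ℤ) : ℕ → Matrix (Fin 2) (Fin 2) ℂ
  | 0 => 1
  | (k+1) => Amat V E (j + k + 1) * Tprod j k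

variable {V E ψ}

lemma Amat_det (n : ℤ) : (Amat V E n).det = 1 := by
  rw [Amat, Matrix.det_fin_two_of]
  ring

lemma Tprod_det (j : ℤ) (k : ℕ) : (Tprod V E j k).det = 1 := by
  induction k with
  | zero => simp [Tprod]
  | succ k ih => rw [Tprod, Matrix.det_mul, ih, Amat_det]; ring

lemma mulVec2 (a b c d x y : ℂ) :
    (!![a,b;c,d]).mulVec ![x,y] = ![a*x+b*y, c*x+d*y] := by
  funext i
  fin_cases i <;> simp [Matrix.mulVec, dotProduct, Fin.sum_univ_two]

lemma step (heq : ∀ n : ℤ, ψ (n+1) + ψ (n-1) + V n * ψ n = E * ψ n) (n : ℤ) :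
    Phi ψ n = (Amat V E n).mulVec (Phi ψ (n-1)) := by
  unfold Amat Phi
  rw [mulVec2]
  have h1 : n - 1 + 1 = n := by ring
  rw [h1]
  funext i
  fin_cases i
  · show ψ (n+1) = (E - V n) * ψ n + (-1) * ψ (n-1)
    linear_combination heq n
  · show ψ n = 1 * ψ n + 0 * ψ (n-1)
    ring

lemma Tprod_mulVec (heq : ∀ n : ℤ, ψ (n+1) + ψ (n-1) + V n * ψ n = E * ψ n)
    (j : ℤ) (k : ℕ) : Phi ψ (j + k) = (Tprod V E j k).mulVec (Phi ψ j) := by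
  induction k with
  | zero => simp [Tprod, Matrix.one_mulVec]
  | succ k ih =>
      have h1 : j + ((k:ℤ) + 1) = (j + k + 1) := by ring
      have h2 : (j + (k:ℤ) + 1) - 1 = j + k := by ring
      have h3 := step heq (j + k + 1)
      rw [h2] at h3
      push_cast
      rw [h1, h3, ih, Tprod, ← Matrix.mulVec_mulVec]

lemma Tprod_congr (j j' : ℤ) (k : ℕ)
    (h : ∀ i : ℕ, 1 ≤ i → i ≤ k → V (j + i) = V (j' + i)) :
    Tprod V E j k = Tprod V E j' k := by
  induction k with
  | zero => rfl
  | succ k ih =>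
      rw [Tprod, Tprod]
      have e1 : V (j + k + 1) = V (j' + k + 1) := by
        have := h (k+1) (by omega) (by omega)
        push_cast at this
        convert this using 2 <;> ring
      rw [ih (fun i h1 h2 => h i h1 (by omega))]
      unfold Amat
      rw [e1]

lemma cayley (B : Matrix (Fin 2) (Fin 2) ℂ) (h : B.det = 1) :
    B * B = (B.trace) • B - 1 := by
  have ha := Matrix.det_fin_two B
  rw [h] at ha
  ext i j
  rw [Matrix.mul_apply, Fin.sum_univ_two]
  fin_cases i <;> fin_cases j <;>
    simp [Matrix.trace_fin_two, Matrix.one_apply, Fin.mk_zero, Fin.mk_one, Fin.isValue] <;>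
    (first
      | linear_combination ha
      | linear_combination -ha
      | linear_combination 2*ha
      | linear_combination -2*ha
      | ring)

/-- the three-block Gordon inequality -/
lemma gordon_ineq (heq : ∀ n : ℤ, ψ (n+1) + ψ (n-1) + V n * ψ n = E * ψ n)
    (c : ℤ) (p : ℕ) (hp : 1 ≤ p)
    (hper : ∀ m : ℤ, c - p ≤ m → m ≤ c + p → V (m + p) = V m) :
    (‖ψ c‖ ≤ ‖ψ (c - p)‖ + ‖ψ (c + p)‖ + ‖ψ (c + 2*p)‖) ∧
    (‖ψ (c+1)‖ ≤ ‖ψ (c - p + 1)‖ + ‖ψ (c + p + 1)‖ + ‖ψ (c + 2*p + 1)‖) := by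
  set B := Tprod V E c p with hB
  have hdet : B.det = 1 := Tprod_det c p
  set t := B.trace with ht
  have hCH : B * B = t • B - 1 := cayley B hdet
  -- transfer identities
  have h1 : Phi ψ (c + p) = B.mulVec (Phi ψ c) := Tprod_mulVec heq c p
  have hT2 : Tprod V E (c + p) p = B := by
    apply Tprod_congr
    intro i hi1 hi2
    have := hper (c + i) (by omega) (by omega)
    convert this using 2
    ring
  have hT0 : Tprod V E (c - p) p = B := by
    apply Tprod_congr
    intro i hi1 hi2
    have := hper (c - p + i) (by omega) (by omega)
    rw [← this]
    congr 1
    ring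
  have h2 : Phi ψ (c + 2*p) = B.mulVec (Phi ψ (c + p)) := by
    have := Tprod_mulVec heq (V := V) (E := E) (c + p) p
    rw [hT2] at this
    rw [← this]
    congr 1
    ring
  have h0 : Phi ψ c = B.mulVec (Phi ψ (c - p)) := by
    have := Tprod_mulVec heq (V := V) (E := E) (c - p) p
    rw [hT0] at this
    rw [← this]
    congr 1
    ring
  by_cases hcase : ‖t‖ ≤ 1
  · -- Phi c = t • Phi (c+p) - Phi (c+2p)
    have key : Phi ψ c = t • Phi ψ (c + p) - Phi ψ (c + 2*p) := by
      have e1 : (1 : Matrix (Fin 2) (Fin 2) ℂ) = t • B - B * B := by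
        rw [hCH]
        exact (sub_sub_cancel _ _).symm
      calc Phi ψ c = (1 : Matrix (Fin 2) (Fin 2) ℂ).mulVec (Phi ψ c) := by
            rw [Matrix.one_mulVec]
      _ = (t • B - B * B).mulVec (Phi ψ c) := by rw [← e1]
      _ = t • (B.mulVec (Phi ψ c)) - (B * B).mulVec (Phi ψ c) := by
            rw [Matrix.sub_mulVec, Matrix.smul_mulVec]
      _ = t • Phi ψ (c + p) - Phi ψ (c + 2*p) := by
            rw [← h1, h2, h1, Matrix.mulVec_mulVec]
    constructor
    · have k1 := congrFun key 1
      simp only [Phi, Pi.sub_apply, Pi.smul_apply, Matrix.cons_val_one, Matrix.head_cons,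
        smul_eq_mul, Matrix.cons_val_zero] at k1
      calc ‖ψ c‖ = ‖t * ψ (c + p) - ψ (c + 2*p)‖ := by rw [k1]
      _ ≤ ‖t * ψ (c + p)‖ + ‖ψ (c + 2*p)‖ := norm_sub_le _ _
      _ = ‖t‖ * ‖ψ (c + p)‖ + ‖ψ (c + 2*p)‖ := by rw [norm_mul]
      _ ≤ 1 * ‖ψ (c + p)‖ + ‖ψ (c + 2*p)‖ := by
            have := norm_nonneg (ψ (c+p))
            nlinarith [norm_nonneg (ψ (c+p))]
      _ ≤ ‖ψ (c - p)‖ + ‖ψ (c + p)‖ + ‖ψ (c + 2*p)‖ := by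
            have := norm_nonneg (ψ (c - p))
            nlinarith
    · have k1 := congrFun key 0
      simp only [Phi, Pi.sub_apply, Pi.smul_apply, Matrix.cons_val_zero, smul_eq_mul] at k1
      calc ‖ψ (c+1)‖ = ‖t * ψ (c + p + 1) - ψ (c + 2*p + 1)‖ := by rw [k1]
      _ ≤ ‖t * ψ (c + p + 1)‖ + ‖ψ (c + 2*p + 1)‖ := norm_sub_le _ _
      _ = ‖t‖ * ‖ψ (c + p + 1)‖ + ‖ψ (c + 2*p + 1)‖ := by rw [norm_mul]
      _ ≤ 1 * ‖ψ (c + p + 1)‖ + ‖ψ (c + 2*p + 1)‖ := by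
            nlinarith [norm_nonneg (ψ (c + p + 1))]
      _ ≤ ‖ψ (c - p + 1)‖ + ‖ψ (c + p + 1)‖ + ‖ψ (c + 2*p + 1)‖ := by
            have := norm_nonneg (ψ (c - p + 1))
            nlinarith
  · push_neg at hcase
    -- t • Phi c = Phi (c+p) + Phi (c-p)
    have key : t • Phi ψ c = Phi ψ (c + p) + Phi ψ (c - p) := by
      have e2 : Phi ψ (c + p) = (B * B).mulVec (Phi ψ (c - p)) := by
        rw [← Matrix.mulVec_mulVec, ← h0, h1]
      rw [e2, hCH, Matrix.sub_mulVec, Matrix.smul_mulVec, ← h0, Matrix.one_mulVec]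
      abel
    constructor
    · have k1 := congrFun key 1
      simp only [Phi, Pi.add_apply, Pi.smul_apply, Matrix.cons_val_one, Matrix.head_cons,
        smul_eq_mul, Matrix.cons_val_zero] at k1
      have hn : ‖t‖ * ‖ψ c‖ ≤ ‖ψ (c + p)‖ + ‖ψ (c - p)‖ := by
        calc ‖t‖ * ‖ψ c‖ = ‖t * ψ c‖ := (norm_mul _ _).symm
        _ = ‖ψ (c + p) + ψ (c - p)‖ := by rw [k1]
        _ ≤ ‖ψ (c + p)‖ + ‖ψ (c - p)‖ := norm_add_le _ _
      nlinarith [norm_nonneg (ψ c), norm_nonneg (ψ (c + 2*p))]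
    · have k1 := congrFun key 0
      simp only [Phi, Pi.add_apply, Pi.smul_apply, Matrix.cons_val_zero, smul_eq_mul] at k1
      have hn : ‖t‖ * ‖ψ (c+1)‖ ≤ ‖ψ (c + p + 1)‖ + ‖ψ (c - p + 1)‖ := by
        calc ‖t‖ * ‖ψ (c+1)‖ = ‖t * ψ (c+1)‖ := (norm_mul _ _).symm
        _ = ‖ψ (c + p + 1) + ψ (c - p + 1)‖ := by rw [k1]
        _ ≤ ‖ψ (c + p + 1)‖ + ‖ψ (c - p + 1)‖ := norm_add_le _ _
      nlinarith [norm_nonneg (ψ (c+1)), norm_nonneg (ψ (c + 2*p + 1))]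

/-- propagation of zero initial data -/
lemma vanish (heq : ∀ n : ℤ, ψ (n+1) + ψ (n-1) + V n * ψ n = E * ψ n)
    (a : ℤ) (h0 : ψ a = 0) (h1 : ψ (a+1) = 0) : ∀ n : ℤ, ψ n = 0 := by
  have up : ∀ d : ℕ, ψ (a + d) = 0 ∧ ψ (a + d + 1) = 0 := by
    intro d
    induction d with
    | zero => exact ⟨by simpa using h0, by simpa using h1⟩
    | succ d ih =>
        obtain ⟨ih0, ih1⟩ := ih
        constructor
        · convert ih1 using 2; push_cast; ring
        · have he := heq (a + d + 1)
          have e1 : a + d + 1 - 1 = a + d := by ring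
          rw [e1, ih0, ih1] at he
          have : ψ (a + d + 1 + 1) = 0 := by linear_combination he
          convert this using 2
          push_cast
          ring
  have down : ∀ d : ℕ, ψ (a - d) = 0 ∧ ψ (a - d + 1) = 0 := by
    intro d
    induction d with
    | zero => exact ⟨by simpa using h0, by simpa using h1⟩
    | succ d ih =>
        obtain ⟨ih0, ih1⟩ := ih
        constructor
        · have he := heq (a - d)
          rw [ih0, ih1] at he
          have : ψ (a - ((d:ℤ)+1)) = 0 := by
            have e1 : a - ((d:ℤ)+1) = a - d - 1 := by ring
            rw [e1]
            linear_combination he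
          convert this using 2 <;> push_cast <;> ring
        · have : ψ (a - ((d:ℤ)+1) + 1) = 0 := by
            have e1 : a - ((d:ℤ)+1) + 1 = a - d := by ring
            rw [e1]
            exact ih0
          convert this using 2 <;> push_cast <;> ring
  intro n
  rcases le_or_gt a n with h | h
  · have := (up (n - a).toNat).1
    convert this using 2
    omega
  · have := (down (a - n).toNat).1
    convert this using 2
    omega

end gordon



section gordonmain

lemma gordon_main (V : ℤ → ℂ) (E : ℂ) (ψ : ℤ → ℂ)
    (heq : ∀ n : ℤ, ψ (n+1) + ψ (n-1) + V n * ψ n = E * ψ n)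
    (hsum : Summable (fun n : ℤ => ‖ψ n‖ ^ (2:ℝ)))
    (c : ℤ) (hG : ∀ N : ℕ, ∃ p : ℕ, N ≤ p ∧ ∀ m : ℤ, c - p ≤ m → m ≤ c + p → V (m + p) = V m) :
    ψ = 0 := by
  suffices h : ψ c = 0 ∧ ψ (c+1) = 0 by
    funext n
    exact vanish heq c h.1 h.2 n
  by_contra hcon
  set M := max ‖ψ c‖ ‖ψ (c+1)‖ with hMdef
  have hM : 0 < M := by
    rcases (not_and_or.mp hcon) with h | h
    · calc (0:ℝ) < ‖ψ c‖ := norm_pos_iff.mpr h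
      _ ≤ M := le_max_left _ _
    · calc (0:ℝ) < ‖ψ (c+1)‖ := norm_pos_iff.mpr h
      _ ≤ M := le_max_right _ _
  have hFin : {n : ℤ | M/4 ≤ ‖ψ n‖}.Finite := by
    have h0 := hsum.tendsto_cofinite_zero
    have h1 : ∀ᶠ n in Filter.cofinite, ‖ψ n‖ ^ (2:ℝ) < (M/4) ^ (2:ℝ) := by
      apply h0.eventually (gt_mem_nhds ?_)
      positivity
    rw [Filter.eventually_cofinite] at h1
    apply h1.subset
    intro n hn
    simp only [Set.mem_setOf_eq, not_lt] at hn ⊢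
    exact Real.rpow_le_rpow (by positivity) hn (by norm_num)
  obtain ⟨N, hN⟩ : ∃ N : ℕ, ∀ n : ℤ, M/4 ≤ ‖ψ n‖ → (n - c).natAbs ≤ N := by
    have himg : ((fun n : ℤ => (n - c).natAbs) '' {n : ℤ | M/4 ≤ ‖ψ n‖}).Finite :=
      hFin.image _
    obtain ⟨N, hNb⟩ := himg.bddAbove
    exact ⟨N, fun n hn => hNb (Set.mem_image_of_mem _ hn)⟩
  have hsmall : ∀ n : ℤ, (N:ℤ) < (n - c).natAbs → ‖ψ n‖ < M/4 := by
    intro n hn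
    by_contra hge
    push_neg at hge
    have := hN n hge
    omega
  obtain ⟨p, hp1, hper⟩ := hG (N + 2)
  have hp : 1 ≤ p := by omega
  obtain ⟨g1, g2⟩ := gordon_ineq heq c p hp hper
  have e1 : ‖ψ (c - p)‖ < M/4 := by
    apply hsmall
    rw [show c - (p:ℤ) - c = -(p:ℤ) by ring]
    rw [Int.natAbs_neg, Int.natAbs_natCast]
    omega
  have e2 : ‖ψ (c + p)‖ < M/4 := by
    apply hsmall
    rw [show c + (p:ℤ) - c = (p:ℤ) by ring, Int.natAbs_natCast]
    omega
  have e3 : ‖ψ (c + 2*p)‖ < M/4 := by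
    apply hsmall
    rw [show c + 2*(p:ℤ) - c = ((2*p : ℕ) : ℤ) by push_cast; ring, Int.natAbs_natCast]
    omega
  have e4 : ‖ψ (c - p + 1)‖ < M/4 := by
    apply hsmall
    rw [show c - (p:ℤ) + 1 - c = -(((p - 1 : ℕ)):ℤ) by push_cast [hp]; ring]
    rw [Int.natAbs_neg, Int.natAbs_natCast]
    omega
  have e5 : ‖ψ (c + p + 1)‖ < M/4 := by
    apply hsmall
    rw [show c + (p:ℤ) + 1 - c = (((p + 1 : ℕ)):ℤ) by push_cast; ring, Int.natAbs_natCast]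
    omega
  have e6 : ‖ψ (c + 2*p + 1)‖ < M/4 := by
    apply hsmall
    rw [show c + 2*(p:ℤ) + 1 - c = (((2*p + 1 : ℕ)):ℤ) by push_cast; ring, Int.natAbs_natCast]
    omega
  have hb1 : ‖ψ c‖ < 3 * (M/4) := by linarith
  have hb2 : ‖ψ (c+1)‖ < 3 * (M/4) := by linarith
  have : M < 3 * (M/4) := max_lt hb1 hb2
  linarith

end gordonmain



-- ===== Section 9: assembly =====



/-- for a minimal substitution dynamical system over `A ⊂ ℝ` with unique
invariant measure `μ`, if some `u ∈ W(S)` starts with a letter `e ∈ C` and `uuue ∈ W(S)`,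
then `H_ω` has no eigenvalues for `μ`-a.e. `ω`. -/
theorem statement9 (𝒜 : Finset ℝ) (S : 𝒜 → List 𝒜) (hS : IsSubstSystem S)
    (hmin : Minimal S) (μ : Measure (ℤ → 𝒜)) (hprob : IsProbabilityMeasure μ)
    (hsupp : μ (OmegaS S) = 1) (hinv : μ.map (shift 1) = μ)
    (huniq : ∀ ν : Measure (ℤ → 𝒜), IsProbabilityMeasure ν → ν (OmegaS S) = 1 →
      ν.map (shift 1) = ν → ν = μ)
    (u : List 𝒜) (e : 𝒜) (hu : u ∈ WS S) (he : e ∈ Cset S) (hhead : u.head? = some e)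
    (hcube : u ++ u ++ u ++ [e] ∈ WS S) :
    ∀ᵐ ω ∂μ, ∀ E : ℝ, ∀ ψ : ℤ → ℂ, Memℓp ψ 2 →
      (∀ n : ℤ, ψ (n + 1) + ψ (n - 1) + ((ω n : ℝ) : ℂ) * ψ n = (E : ℂ) * ψ n) →
      ψ = 0 := by

  have hC : CondC S := hS.2
  -- unboundedness of |S^n(e)|
  have he' : ∀ M : ℕ, ∃ n, M < (iter S n [e]).length := by
    have : e ∉ Bset S := he
    simp only [Bset, Set.mem_setOf_eq, not_exists, not_forall] at this
    intro M
    obtain ⟨n, hn⟩ := this M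
    exact ⟨n, by omega⟩
  have hK2 : 2 ≤ Kone S := Kone_two he'
  obtain ⟨Cc, hCc⟩ := growth_comp hC hmin hK2 he'
  have hCc1 : 1 ≤ Cc := by
    by_contra hc
    push_neg at hc
    interval_cases Cc
    obtain ⟨n0, hn0⟩ := he' 0
    have := hCc n0
    have h2 := le_Kmax S n0 e
    omega
  -- u = e :: tail
  obtain ⟨u', rfl⟩ : ∃ u', u = e :: u' := by
    cases u with
    | nil => simp at hhead
    | cons a u' =>
        simp only [List.head?_cons, Option.some.injEq] at hhead
        exact ⟨u', by rw [hhead]⟩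
  set x : List 𝒜 := (e :: u') ++ (e :: u') ++ (e :: u') ++ [e] with hx
  obtain ⟨R, hR1, hRprop⟩ := star hC hmin hK2 hcube
  -- choose scales
  have hscale : ∀ i : ℕ, ∃ n : ℕ, i + 1 ≤ (iter S n [e]).length := by
    intro i
    obtain ⟨n, hn⟩ := he' i
    exact ⟨n, by omega⟩
  choose nn hnn using hscale
  -- abbreviations
  set wb : ℕ → List 𝒜 := fun i => iter S (nn i) (e :: u') with hwb
  set sb : ℕ → List 𝒜 := fun i => iter S (nn i) [e] with hsb
  set pp : ℕ → ℕ := fun i => (wb i).length with hpp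
  set ss : ℕ → ℕ := fun i => (sb i).length with hss
  have hsw : ∀ i, sb i <+: wb i := by
    intro i
    have : (e :: u') = [e] ++ u' := rfl
    rw [hwb, hsb]
    simp only
    rw [this, iter_append]
    exact List.prefix_append _ _
  have hps : ∀ i, ss i ≤ pp i := fun i => (hsw i).length_le
  have hss1 : ∀ i, i + 1 ≤ ss i := fun i => hnn i
  have hvi : ∀ i, iter S (nn i) x = wb i ++ wb i ++ wb i ++ sb i := by
    intro i
    rw [hx, iter_append, iter_append, iter_append]
  have hvlen : ∀ i, (iter S (nn i) x).length = 3 * pp i + ss i := by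
    intro i
    rw [hvi i]
    simp only [List.length_append]
    rw [hpp, hss]
    ring
  have hKm1 : ∀ i, 1 ≤ Kmax S (nn i) := by
    intro i
    have h1 := le_Kmax S (nn i) e
    have := hss1 i
    rw [hss, hsb] at this
    simp only at this
    omega
  have hKmss : ∀ i, Kmax S (nn i) ≤ Cc * ss i := fun i => hCc (nn i)
  set D : ℕ → ℕ := fun i => (R + 2) * Kmax S (nn i) with hD
  have hDle : ∀ i, D i ≤ (R + 2) * Cc * ss i := by
    intro i
    rw [hD]
    calc (R + 2) * Kmax S (nn i) ≤ (R + 2) * (Cc * ss i) :=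
      Nat.mul_le_mul_left _ (hKmss i)
    _ = (R + 2) * Cc * ss i := by ring
  have hDcontain : ∀ i, ∀ W ∈ WS S, D i ≤ W.length → iter S (nn i) x <:+: W := by
    intro i W hW hWl
    exact hRprop (nn i) (hKm1 i) W hW hWl
  -- the events
  set Ecube : ℕ → Set (ℤ → 𝒜) := fun i =>
    ⋃ j : Fin (ss i), {ω : ℤ → 𝒜 | OccursAt (iter S (nn i) x) ω (-(pp i : ℤ) - (j:ℕ))} with hEcube
  have hEm : ∀ i, MeasurableSet (Ecube i) :=
    fun i => MeasurableSet.iUnion (fun j => measurableSet_occursAt _ _)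
  -- membership in the event gives a centered cube
  have hEper : ∀ i, ∀ ω ∈ Ecube i, Per ω 0 (pp i) := by
    intro i ω hω
    rw [hEcube] at hω
    simp only [Set.mem_iUnion, Set.mem_setOf_eq] at hω
    obtain ⟨j, hj⟩ := hω
    rw [hvi i] at hj
    have := per_of_cube_occ (hsw i) hj (c := 0) ?_ ?_
    · exact this
    · simp only [hpp]
      omega
    · have hj2 := j.2
      simp only [hss] at hj2
      simp only [hpp, hss]
      push_cast
      omega
  -- counting hypothesis
  have hcount : ∀ i, ∀ ω ∈ OmegaS S, ∃ k₀ : ℕ, k₀ + ss i ≤ D i ∧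
      ∀ j, j < ss i → shift ((k₀ + j : ℕ) : ℤ) ω ∈ Ecube i := by
    intro i ω hω
    set W : List 𝒜 := win ω (-(pp i : ℤ)) (D i) with hW
    have hWmem : W ∈ WS S := win_mem_WS hω _ _
    have hWlen : W.length = D i := win_length _ _ _
    have hvW : iter S (nn i) x <:+: W := hDcontain i W hWmem (by omega)
    obtain ⟨q, hqocc, hq1, hq2⟩ := occursAt_infix (occursAt_win _ _) hvW
    rw [hWlen] at hq2
    have hq0 : (0:ℤ) ≤ q + pp i := by omega
    refine ⟨(q + pp i).toNat, ?_, ?_⟩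
    · have hvl := hvlen i
      have : q + (iter S (nn i) x).length ≤ -(pp i : ℤ) + D i := hq2
      rw [hvl] at this
      push_cast at this
      omega
    · intro j hj
      rw [hEcube]
      simp only [Set.mem_iUnion, Set.mem_setOf_eq]
      refine ⟨⟨j, hj⟩, ?_⟩
      rw [occursAt_shift]
      have : -(pp i : ℤ) - (j:ℕ) + ((q + pp i).toNat + j : ℕ) = q := by
        push_cast
        omega
      rw [this]
      exact hqocc
  -- measure lower bound for events
  have hOmae : ∀ᵐ ω ∂μ, ω ∈ OmegaS S := by
    rw [MeasureTheory.ae_iff]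
    have : {ω : ℤ → 𝒜 | ¬ ω ∈ OmegaS S} = (OmegaS S)ᶜ := rfl
    rw [this, measure_compl (measurableSet_OmegaS S) (measure_ne_top μ _), hsupp]
    simp
  set δ : ENNReal := (((R + 2) * Cc : ℕ) : ENNReal)⁻¹ with hδ
  have hRCne : (((R + 2) * Cc : ℕ) : ENNReal) ≠ 0 := by
    simp only [ne_eq, Nat.cast_eq_zero]
    positivity
  have hRCnt : (((R + 2) * Cc : ℕ) : ENNReal) ≠ ⊤ := ENNReal.natCast_ne_top _
  have hEbound : ∀ i, δ ≤ μ (Ecube i) := by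
    intro i
    have hcb : (ss i : ENNReal) ≤ (D i : ENNReal) * μ (Ecube i) :=
      counting_bound hinv hOmae (hEm i) (D i) (ss i) (hcount i)
    have hDS : (D i : ENNReal) ≤ ((R + 2) * Cc : ℕ) * (ss i : ENNReal) := by
      rw [← Nat.cast_mul]
      exact_mod_cast Nat.cast_le.mpr (by
        have := hDle i
        calc D i ≤ (R + 2) * Cc * ss i := this
        _ = (R + 2) * Cc * ss i := rfl)
    have h1 : (ss i : ENNReal) ≤ ((R + 2) * Cc : ℕ) * (ss i : ENNReal) * μ (Ecube i) := by
      calc (ss i : ENNReal) ≤ (D i : ENNReal) * μ (Ecube i) := hcb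
      _ ≤ ((R + 2) * Cc : ℕ) * (ss i : ENNReal) * μ (Ecube i) :=
        mul_le_mul_left hDS _
    have hssne : ((ss i : ℕ) : ENNReal) ≠ 0 := by
      simp only [ne_eq, Nat.cast_eq_zero]
      have := hss1 i
      omega
    have hssnt : ((ss i : ℕ) : ENNReal) ≠ ⊤ := ENNReal.natCast_ne_top _
    -- cancel ss i
    have h2 : (1 : ENNReal) ≤ ((R + 2) * Cc : ℕ) * μ (Ecube i) := by
      have h3 : (ss i : ENNReal) * 1 ≤ (ss i : ENNReal) * (((R + 2) * Cc : ℕ) * μ (Ecube i)) := by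
        rw [mul_one]
        calc (ss i : ENNReal) ≤ ((R + 2) * Cc : ℕ) * (ss i : ENNReal) * μ (Ecube i) := h1
        _ = (ss i : ENNReal) * (((R + 2) * Cc : ℕ) * μ (Ecube i)) := by ring
      exact (ENNReal.mul_le_mul_iff_right hssne hssnt).mp h3
    calc δ = δ * 1 := (mul_one δ).symm
    _ ≤ δ * (((R + 2) * Cc : ℕ) * μ (Ecube i)) := mul_le_mul_right h2 δ
    _ = (δ * ((R + 2) * Cc : ℕ)) * μ (Ecube i) := by ring
    _ = 1 * μ (Ecube i) := by
        rw [hδ, ENNReal.inv_mul_cancel hRCne hRCnt]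
    _ = μ (Ecube i) := one_mul _
  -- limsup and the Gordon set
  have hL : δ ≤ μ (⋂ N : ℕ, ⋃ (i : ℕ) (_ : N ≤ i), Ecube i) :=
    limsup_lower_bound Ecube hEm δ hEbound
  have hLG : (⋂ N : ℕ, ⋃ (i : ℕ) (_ : N ≤ i), Ecube i) ⊆ Gset ↥𝒜 := by
    intro ω hω
    simp only [Set.mem_iInter, Set.mem_iUnion] at hω
    refine ⟨0, fun N => ?_⟩
    obtain ⟨i, hiN, hiE⟩ := hω N
    refine ⟨pp i, ?_, hEper i ω hiE⟩
    have := hss1 i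
    have := hps i
    omega
  have hGpos : 0 < μ (Gset ↥𝒜) := by
    calc (0:ENNReal) < δ := by
          rw [hδ]
          simp only [pos_iff_ne_zero, ne_eq, ENNReal.inv_eq_zero]
          exact hRCnt
    _ ≤ μ (⋂ N : ℕ, ⋃ (i : ℕ) (_ : N ≤ i), Ecube i) := hL
    _ ≤ μ (Gset ↥𝒜) := measure_mono hLG
  have hGfull : μ (Gset ↥𝒜) = 1 :=
    ergodic_full_measure hinv (measurableSet_OmegaS S) hsupp huniq
      measurableSet_Gset Gset_shift_inv hGpos
  -- almost sure conclusion
  have hae : ∀ᵐ ω ∂μ, ω ∈ Gset ↥𝒜 := by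
    rw [MeasureTheory.ae_iff]
    have : {ω : ℤ → ↥𝒜 | ¬ ω ∈ Gset ↥𝒜} = (Gset ↥𝒜)ᶜ := rfl
    rw [this, measure_compl measurableSet_Gset (measure_ne_top μ _), hGfull]
    simp
  filter_upwards [hae] with ω hω
  intro E ψ hℓ2 heq
  obtain ⟨c, hc⟩ := hω
  apply gordon_main (fun n => ((ω n : ℝ) : ℂ)) (E : ℂ) ψ heq
  · have hs := hℓ2.summable (by norm_num : 0 < (2 : ENNReal).toReal)
    have : (2 : ENNReal).toReal = (2:ℝ) := by norm_num
    rw [this] at hs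
    exact hs
  · intro N
    obtain ⟨p, hp1, hp2⟩ := hc N
    exact ⟨p, hp1, fun m h1 h2 => by rw [hp2 m h1 h2]⟩

end SubstLR
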